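/- Let A=(-1,0) and B=(1,0) and let C be a point with the triangle ABC having the property tan(A/2)+tan(B/2)+tan(C/2) = 2 (so the outer Soddy circle degenerates to a line L tangent to the three kissing circles). Then the circle with diameter AB is also tangent to L: if At, Bt are the tangency points of L with the kissing circles at A and B, and T is the tangency point of those two kissing circles, then the foot M of the perpendicular from the midpoint O of AB to L satisfies |OM| = |AB|/2 and M is the midpoint of At Bt. -/

import Mathlib

open EuclideanGeometry
open RealInnerProductSpace

theorem foot_perp18 {E : Type*} [NormedAddCommGroup E] [InnerProductSpace ℝ E]
    (P F v X : E) (d s : ℝ) (hF : F = s • v + X) (hd : dist P F = d)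
    (hmin : ∀ t : ℝ, d ≤ dist P (t • v + X)) : ⟪P - F, v⟫ = 0 := by
  have key : ∀ t : ℝ, 0 ≤ -(2*t) * ⟪P - F, v⟫ + t^2 * ‖v‖^2 := by
    intro t
    have h1 : d ≤ dist P ((s + t) • v + X) := hmin _
    have h2 : (s + t) • v + X = F + t • v := by rw [hF, add_smul]; abel
    rw [h2] at h1
    have h3 : dist P (F + t • v) = ‖(P - F) - t • v‖ := by
      rw [dist_eq_norm]; congr 1; abel
    rw [h3] at h1
    have h4 : ‖P - F‖ ≤ ‖(P - F) - t • v‖ := by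
      calc ‖P - F‖ = d := by rw [← dist_eq_norm, hd]
        _ ≤ _ := h1
    have h5 : ‖P - F‖^2 ≤ ‖(P - F) - t • v‖^2 := pow_le_pow_left₀ (norm_nonneg _) h4 2
    rw [norm_sub_sq_real (P - F) (t • v), real_inner_smul_right, norm_smul] at h5
    have h6 : (‖t‖ * ‖v‖)^2 = t^2 * ‖v‖^2 := by
      rw [mul_pow]; norm_num [sq_abs]
    rw [h6] at h5
    linarith
  by_cases hv : ‖v‖ = 0
  · have hv0 : v = 0 := norm_eq_zero.mp hv
    simp [hv0]
  · have hV : 0 < ‖v‖^2 := by positivity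
    set I := ⟪P - F, v⟫ with hI
    have h7 := key (I / ‖v‖^2)
    have h8 : -(2*(I/‖v‖^2))*I + (I/‖v‖^2)^2*‖v‖^2 = (-(I^2))/‖v‖^2 := by
      field_simp; ring
    rw [h8] at h7
    have h9 : 0 ≤ -(I^2) := by
      have h10 := mul_nonneg h7 (le_of_lt hV)
      rwa [div_mul_cancel₀ _ (ne_of_gt hV)] at h10
    have h11 : I^2 = 0 := le_antisymm (by linarith) (sq_nonneg I)
    exact sq_eq_zero_iff.mp h11


theorem mainalg18
    (v0 v1 X0 X1 A0 A1 B0 B1 C0 C1 : ℝ)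
    (ra rb rc a b c d : ℝ) (sA sB sC sM : ℝ)
    (hv : 0 < v0^2 + v1^2)
    (hra : 0 < ra) (hrb : 0 < rb) (hrc : 0 < rc) (hd : 0 ≤ d)
    (hab : ra + rb = c) (hac : ra + rc = b) (hbc : rb + rc = a)
    (perpA : (A0 - (sA*v0+X0)) * v0 + (A1 - (sA*v1+X1)) * v1 = 0)
    (normA : (A0 - (sA*v0+X0))^2 + (A1 - (sA*v1+X1))^2 = ra^2)
    (perpB : (B0 - (sB*v0+X0)) * v0 + (B1 - (sB*v1+X1)) * v1 = 0)
    (normB : (B0 - (sB*v0+X0))^2 + (B1 - (sB*v1+X1))^2 = rb^2)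
    (perpC : (C0 - (sC*v0+X0)) * v0 + (C1 - (sC*v1+X1)) * v1 = 0)
    (normC : (C0 - (sC*v0+X0))^2 + (C1 - (sC*v1+X1))^2 = rc^2)
    (perpO : ((A0+B0)/2 - (sM*v0+X0)) * v0 + ((A1+B1)/2 - (sM*v1+X1)) * v1 = 0)
    (normO : ((A0+B0)/2 - (sM*v0+X0))^2 + ((A1+B1)/2 - (sM*v1+X1))^2 = d^2)
    (hnAB : (A0-B0)^2 + (A1-B1)^2 = c^2)
    (hnCA : (C0-A0)^2 + (C1-A1)^2 = b^2)
    (hnBC : (B0-C0)^2 + (B1-C1)^2 = a^2) :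
    (d = c/2 ∧ sM = (sA + sB)/2) ∨
      (∃ r : ℝ, C0 - A0 = r * (B0 - A0) ∧ C1 - A1 = r * (B1 - A1)) := by
  obtain ⟨Dv, hDv⟩ : ∃ x : ℝ, x = v0^2 + v1^2 := ⟨_, rfl⟩
  have hvD : 0 < Dv := by rw [hDv]; exact hv
  have hDv0 : Dv ≠ 0 := ne_of_gt hvD
  obtain ⟨kA, hkA⟩ : ∃ x : ℝ, x = (A1 - (sA*v1+X1))*v0 - (A0 - (sA*v0+X0))*v1 := ⟨_, rfl⟩
  obtain ⟨kB, hkB⟩ : ∃ x : ℝ, x = (B1 - (sB*v1+X1))*v0 - (B0 - (sB*v0+X0))*v1 := ⟨_, rfl⟩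
  obtain ⟨kC, hkC⟩ : ∃ x : ℝ, x = (C1 - (sC*v1+X1))*v0 - (C0 - (sC*v0+X0))*v1 := ⟨_, rfl⟩
  obtain ⟨kO, hkO⟩ : ∃ x : ℝ, x = ((A1+B1)/2 - (sM*v1+X1))*v0 - ((A0+B0)/2 - (sM*v0+X0))*v1 := ⟨_, rfl⟩
  have FA : kA^2 = Dv * ra^2 := by
    rw [hkA, hDv]
    linear_combination (v0^2+v1^2) * normA - ((A0-(sA*v0+X0))*v0 + (A1-(sA*v1+X1))*v1) * perpA
  have FB : kB^2 = Dv * rb^2 := by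
    rw [hkB, hDv]
    linear_combination (v0^2+v1^2) * normB - ((B0-(sB*v0+X0))*v0 + (B1-(sB*v1+X1))*v1) * perpB
  have FC : kC^2 = Dv * rc^2 := by
    rw [hkC, hDv]
    linear_combination (v0^2+v1^2) * normC - ((C0-(sC*v0+X0))*v0 + (C1-(sC*v1+X1))*v1) * perpC
  have FO : kO^2 = Dv * d^2 := by
    rw [hkO, hDv]
    linear_combination (v0^2+v1^2) * normO - (((A0+B0)/2-(sM*v0+X0))*v0 + ((A1+B1)/2-(sM*v1+X1))*v1) * perpO
  have cAB0 : (A0 - B0) * Dv = -(kA - kB) * v1 + (sA - sB) * (v0 * Dv) := by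
    rw [hkA, hkB, hDv]; linear_combination v0 * perpA - v0 * perpB
  have cAB1 : (A1 - B1) * Dv = (kA - kB) * v0 + (sA - sB) * (v1 * Dv) := by
    rw [hkA, hkB, hDv]; linear_combination v1 * perpA - v1 * perpB
  have cCA0 : (C0 - A0) * Dv = -(kC - kA) * v1 + (sC - sA) * (v0 * Dv) := by
    rw [hkC, hkA, hDv]; linear_combination v0 * perpC - v0 * perpA
  have cCA1 : (C1 - A1) * Dv = (kC - kA) * v0 + (sC - sA) * (v1 * Dv) := by
    rw [hkC, hkA, hDv]; linear_combination v1 * perpC - v1 * perpA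
  have cBC0 : (B0 - C0) * Dv = -(kB - kC) * v1 + (sB - sC) * (v0 * Dv) := by
    rw [hkB, hkC, hDv]; linear_combination v0 * perpB - v0 * perpC
  have cBC1 : (B1 - C1) * Dv = (kB - kC) * v0 + (sB - sC) * (v1 * Dv) := by
    rw [hkB, hkC, hDv]; linear_combination v1 * perpB - v1 * perpC
  have qAB : c^2 * Dv = (kA - kB)^2 + (sA - sB)^2 * Dv^2 := by
    apply mul_right_cancel₀ hDv0
    rw [hDv] at cAB0 cAB1 ⊢
    linear_combination (-(v0^2+v1^2)^2) * hnAB +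
      ((A0-B0)*(v0^2+v1^2) + (-(kA-kB)*v1 + (sA-sB)*(v0*(v0^2+v1^2)))) * cAB0 +
      ((A1-B1)*(v0^2+v1^2) + ((kA-kB)*v0 + (sA-sB)*(v1*(v0^2+v1^2)))) * cAB1
  have qCA : b^2 * Dv = (kC - kA)^2 + (sC - sA)^2 * Dv^2 := by
    apply mul_right_cancel₀ hDv0
    rw [hDv] at cCA0 cCA1 ⊢
    linear_combination (-(v0^2+v1^2)^2) * hnCA +
      ((C0-A0)*(v0^2+v1^2) + (-(kC-kA)*v1 + (sC-sA)*(v0*(v0^2+v1^2)))) * cCA0 +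
      ((C1-A1)*(v0^2+v1^2) + ((kC-kA)*v0 + (sC-sA)*(v1*(v0^2+v1^2)))) * cCA1
  have qBC : a^2 * Dv = (kB - kC)^2 + (sB - sC)^2 * Dv^2 := by
    apply mul_right_cancel₀ hDv0
    rw [hDv] at cBC0 cBC1 ⊢
    linear_combination (-(v0^2+v1^2)^2) * hnBC +
      ((B0-C0)*(v0^2+v1^2) + (-(kB-kC)*v1 + (sB-sC)*(v0*(v0^2+v1^2)))) * cBC0 +
      ((B1-C1)*(v0^2+v1^2) + ((kB-kC)*v0 + (sB-sC)*(v1*(v0^2+v1^2)))) * cBC1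
  have hsM0 : ((sA+sB)/2 - sM) * Dv = 0 := by
    rw [hDv]; linear_combination perpO - perpA/2 - perpB/2
  have htM : sM = (sA+sB)/2 := by
    rcases mul_eq_zero.mp hsM0 with h | h
    · linarith
    · exact absurd h hDv0
  have hkOsum : 2 * kO = kA + kB := by rw [hkO, hkA, hkB]; ring
  have h4d : 4 * (Dv * d^2) = (kA + kB)^2 := by
    linear_combination (-4 : ℝ) * FO + (kA + kB + 2*kO) * hkOsum
  have hcpos : 0 < c := by linarith
  have PAB : (kA*kB)^2 = (Dv*(ra*rb))^2 := by
    linear_combination (kB^2) * FA + (Dv*ra^2) * FB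
  have PAC : (kA*kC)^2 = (Dv*(ra*rc))^2 := by
    linear_combination (kC^2) * FA + (Dv*ra^2) * FC
  have PBC : (kB*kC)^2 = (Dv*(rb*rc))^2 := by
    linear_combination (kC^2) * FB + (Dv*rb^2) * FC
  have hDrr : 0 < Dv*(ra*rb) := by positivity
  rcases le_or_gt 0 (kA*kB) with hsign | hsign
  · -- same side: tangency
    left
    have hprod : kA*kB = Dv*(ra*rb) := by
      have h1 : (kA*kB - Dv*(ra*rb)) * (kA*kB + Dv*(ra*rb)) = 0 := by linear_combination PAB
      rcases mul_eq_zero.mp h1 with h | h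
      · linarith
      · linarith
    have hsum2 : (kA+kB)^2 = Dv * c^2 := by
      linear_combination FA + FB + 2*hprod + Dv*(ra+rb+c)*hab
    have hd2 : Dv * (4*d^2) = Dv * (c^2) := by linear_combination h4d + hsum2
    have hd3 : 4*d^2 = c^2 := mul_left_cancel₀ hDv0 hd2
    have : (2*d - c) * (2*d + c) = 0 := by linear_combination hd3
    rcases mul_eq_zero.mp this with h | h
    · exact ⟨by linarith, htM⟩
    · linarith
  · -- opposite sides: contradiction branch
    right
    have hprod : kA*kB = -(Dv*(ra*rb)) := by
      have h1 : (kA*kB - Dv*(ra*rb)) * (kA*kB + Dv*(ra*rb)) = 0 := by linear_combination PAB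
      rcases mul_eq_zero.mp h1 with h | h
      · linarith
      · linarith
    have hdiff2 : (kA - kB)^2 = Dv*c^2 := by
      linear_combination FA + FB - 2*hprod + Dv*(ra+rb+c)*hab
    have heAB : sA = sB := by
      have h1 : (sA-sB)^2 * Dv^2 = 0 := by linear_combination - qAB - hdiff2
      have h2 : (sA - sB)^2 = 0 := by
        rcases mul_eq_zero.mp h1 with h | h
        · exact h
        · exact absurd h (pow_ne_zero _ hDv0)
      have := sq_eq_zero_iff.mp h2
      linarith
    have hKBA0 : kB - kA ≠ 0 := by
      intro h
      have h1 : (kA - kB)^2 = 0 := by rw [show kA - kB = -(kB - kA) by ring, h]; ring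
      have : (0:ℝ) < Dv*c^2 := by positivity
      linarith [hdiff2, h1]
    have hsAC : sA = sC := by
      rcases le_or_gt (kA*kC) 0 with hs2 | hs2
      · have hprodAC : kA*kC = -(Dv*(ra*rc)) := by
          have h1 : (kA*kC - Dv*(ra*rc)) * (kA*kC + Dv*(ra*rc)) = 0 := by linear_combination PAC
          have h2 : 0 < Dv*(ra*rc) := by positivity
          rcases mul_eq_zero.mp h1 with h | h
          · linarith
          · linarith
        have hdAC : (kC - kA)^2 = Dv*b^2 := by
          linear_combination FA + FC - 2*hprodAC + Dv*(ra+rc+b)*hac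
        have h1 : (sC-sA)^2 * Dv^2 = 0 := by linear_combination - qCA - hdAC
        have h2 : (sC - sA)^2 = 0 := by
          rcases mul_eq_zero.mp h1 with h | h
          · exact h
          · exact absurd h (pow_ne_zero _ hDv0)
        have := sq_eq_zero_iff.mp h2
        linarith
      · have hkA2 : 0 < kA^2 := by
          rw [FA]; positivity
        have h5 : kA^2 * (kB*kC) = (kA*kB)*(kA*kC) := by ring
        have h6 : (kA*kB)*(kA*kC) < 0 := mul_neg_of_neg_of_pos hsign hs2
        have hs3 : kB*kC < 0 := by
          by_contra hpos
          push_neg at hpos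
          have h7 : 0 ≤ kA^2 * (kB*kC) := mul_nonneg (le_of_lt hkA2) hpos
          rw [h5] at h7
          linarith
        have hprodBC : kB*kC = -(Dv*(rb*rc)) := by
          have h1 : (kB*kC - Dv*(rb*rc)) * (kB*kC + Dv*(rb*rc)) = 0 := by linear_combination PBC
          have h2 : 0 < Dv*(rb*rc) := by positivity
          rcases mul_eq_zero.mp h1 with h | h
          · linarith
          · linarith
        have hdBC : (kB - kC)^2 = Dv*a^2 := by
          linear_combination FB + FC - 2*hprodBC + Dv*(rb+rc+a)*hbc
        have h1 : (sB-sC)^2 * Dv^2 = 0 := by linear_combination - qBC - hdBC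
        have h2 : (sB - sC)^2 = 0 := by
          rcases mul_eq_zero.mp h1 with h | h
          · exact h
          · exact absurd h (pow_ne_zero _ hDv0)
        have := sq_eq_zero_iff.mp h2
        linarith
    have hz1 : sC - sA = 0 := by rw [hsAC]; ring
    have hz2 : sA - sB = 0 := by rw [heAB]; ring
    refine ⟨(kC - kA)/(kB - kA), ?_, ?_⟩
    · rw [div_mul_eq_mul_div, eq_div_iff hKBA0]
      apply mul_right_cancel₀ hDv0
      linear_combination (kB - kA) * cCA0 + (kC - kA) * cAB0 +
        ((kB - kA) * (v0 * Dv)) * hz1 +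
        ((kC - kA) * (v0 * Dv)) * hz2
    · rw [div_mul_eq_mul_div, eq_div_iff hKBA0]
      apply mul_right_cancel₀ hDv0
      linear_combination (kB - kA) * cCA1 + (kC - kA) * cAB1 +
        ((kB - kA) * (v1 * Dv)) * hz1 +
        ((kC - kA) * (v1 * Dv)) * hz2

set_option maxHeartbeats 2000000

/-- when the half-angle tangents sum to 2, the outer Soddy
circle degenerates to a line `L` tangent to the three kissing circles; then
the circle with diameter `AB` is also tangent to `L`: the foot `M` of the
perpendicular from the midpoint `O` of `AB` to `L` satisfies
`|OM| = |AB| / 2`, and `M` is the midpoint of the tangency points `At, Bt`. -/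
theorem stmt18 (A B C : EuclideanSpace ℝ (Fin 2))
    (hA0 : A 0 = -1) (hA1 : A 1 = 0) (hB0 : B 0 = 1) (hB1 : B 1 = 0)
    (hABC : AffineIndependent ℝ ![A, B, C])
    (a b c p : ℝ)
    (ha : a = dist B C) (hb : b = dist C A) (hc : c = dist A B)
    (hp : p = (a + b + c) / 2)
    (htan : Real.tan (∠ B A C / 2) + Real.tan (∠ A B C / 2)
      + Real.tan (∠ B C A / 2) = 2)
    (L : AffineSubspace ℝ (EuclideanSpace ℝ (Fin 2)))
    (hline : ∃ X Y : EuclideanSpace ℝ (Fin 2), X ≠ Y ∧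
      L = affineSpan ℝ ({X, Y} : Set (EuclideanSpace ℝ (Fin 2))))
    (At Bt Ct T : EuclideanSpace ℝ (Fin 2))
    -- `L` is tangent to the kissing circle centered at `A` at `At`:
    (hAt : At ∈ L) (hAtd : dist A At = p - a)
    (hAtmin : ∀ Q ∈ L, p - a ≤ dist A Q)
    -- `L` is tangent to the kissing circle centered at `B` at `Bt`:
    (hBt : Bt ∈ L) (hBtd : dist B Bt = p - b)
    (hBtmin : ∀ Q ∈ L, p - b ≤ dist B Q)
    -- `L` is tangent to the kissing circle centered at `C` at `Ct`:
    (hCt : Ct ∈ L) (hCtd : dist C Ct = p - c)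
    (hCtmin : ∀ Q ∈ L, p - c ≤ dist C Q)
    -- `T` is the tangency point of the kissing circles centered at `A` and `B`:
    (hT : T ∈ segment ℝ A B) (hTA : dist A T = p - a) (hTB : dist B T = p - b)
    (O M : EuclideanSpace ℝ (Fin 2))
    (hO : O = midpoint ℝ A B)
    -- `M` is the foot of the perpendicular from `O` to `L`:
    (hM : M ∈ L) (hMmin : ∀ Q ∈ L, dist O M ≤ dist O Q) :
    dist O M = dist A B / 2 ∧ M = midpoint ℝ At Bt := by
  obtain ⟨X, Y, hXY, rfl⟩ := hline
  have hvne : Y - X ≠ 0 := sub_ne_zero.mpr (Ne.symm hXY)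
  have innerexp : ∀ x y : EuclideanSpace ℝ (Fin 2), ⟪x, y⟫ = x 0 * y 0 + x 1 * y 1 := by
    intro x y
    simp [PiLp.inner_apply, Fin.sum_univ_two, RCLike.inner_apply]
    ring
  have coord : ∀ (P : EuclideanSpace ℝ (Fin 2)) (s : ℝ), P = s • (Y - X) + X →
      P 0 = s * (Y 0 - X 0) + X 0 ∧ P 1 = s * (Y 1 - X 1) + X 1 := by
    intro P s h
    constructor <;> (rw [h]; simp)
  have dsq : ∀ (P Q : EuclideanSpace ℝ (Fin 2)) (r : ℝ), dist P Q = r →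
      (P 0 - Q 0)^2 + (P 1 - Q 1)^2 = r^2 := by
    intro P Q r h
    have h2 : ⟪P - Q, P - Q⟫ = r^2 := by
      rw [real_inner_self_eq_norm_sq, ← dist_eq_norm, h]
    rw [innerexp] at h2
    simp only [PiLp.sub_apply] at h2
    linear_combination h2
  have perpcomp : ∀ P F : EuclideanSpace ℝ (Fin 2), ⟪P - F, Y - X⟫ = 0 →
      (P 0 - F 0) * (Y 0 - X 0) + (P 1 - F 1) * (Y 1 - X 1) = 0 := by
    intro P F h
    rw [innerexp] at h
    simpa using h
  have hmem : ∀ P ∈ affineSpan ℝ ({X, Y} : Set (EuclideanSpace ℝ (Fin 2))),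
      ∃ s : ℝ, P = s • (Y - X) + X := by
    intro P hP
    have h1 : (P - X) +ᵥ X ∈ affineSpan ℝ ({X, Y} : Set (EuclideanSpace ℝ (Fin 2))) := by
      rwa [vadd_eq_add, sub_add_cancel]
    obtain ⟨r, hr⟩ := vadd_left_mem_affineSpan_pair.mp h1
    refine ⟨r, ?_⟩
    have hr' : r • (Y - X) = P - X := by rw [← hr]; rfl
    rw [hr', sub_add_cancel]
  have hmem2 : ∀ t : ℝ, t • (Y - X) + X ∈ affineSpan ℝ ({X, Y} : Set (EuclideanSpace ℝ (Fin 2))) := by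
    intro t
    have := smul_vsub_vadd_mem_affineSpan_pair t X Y
    rwa [vsub_eq_sub, vadd_eq_add] at this
  obtain ⟨sA, hsA⟩ := hmem At hAt
  obtain ⟨sB, hsB⟩ := hmem Bt hBt
  obtain ⟨sC, hsC⟩ := hmem Ct hCt
  obtain ⟨sM, hsMe⟩ := hmem M hM
  have footA := foot_perp18 A At (Y - X) X (p - a) sA hsA hAtd (fun t => hAtmin _ (hmem2 t))
  have footB := foot_perp18 B Bt (Y - X) X (p - b) sB hsB hBtd (fun t => hBtmin _ (hmem2 t))
  have footC := foot_perp18 C Ct (Y - X) X (p - c) sC hsC hCtd (fun t => hCtmin _ (hmem2 t))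
  have footM := foot_perp18 O M (Y - X) X (dist O M) sM hsMe rfl (fun t => hMmin _ (hmem2 t))
  have hnc : ¬ Collinear ℝ ({A, B, C} : Set (EuclideanSpace ℝ (Fin 2))) :=
    affineIndependent_iff_not_collinear_set.mp hABC
  have pa : 0 < p - a := by
    have h1 : dist B C ≤ dist B A + dist A C := dist_triangle B A C
    have h2 : dist B A + dist A C ≠ dist B C := by
      intro h
      exact hnc (collinear_insert_of_mem_affineSpan_pair (dist_add_dist_eq_iff.mp h).mem_affineSpan)
    have h3 : dist B C < dist B A + dist A C := lt_of_le_of_ne h1 (Ne.symm h2)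
    rw [dist_comm B A, dist_comm A C, ← hc, ← hb, ← ha] at h3
    linarith [hp]
  have pb : 0 < p - b := by
    have h1 : dist A C ≤ dist A B + dist B C := dist_triangle A B C
    have h2 : dist A B + dist B C ≠ dist A C := by
      intro h
      have h4 : Collinear ℝ ({B, A, C} : Set (EuclideanSpace ℝ (Fin 2))) :=
        collinear_insert_of_mem_affineSpan_pair (dist_add_dist_eq_iff.mp h).mem_affineSpan
      rw [Set.insert_comm] at h4
      exact hnc h4
    have h3 : dist A C < dist A B + dist B C := lt_of_le_of_ne h1 (Ne.symm h2)
    rw [dist_comm A C, ← hc, ← hb, ← ha] at h3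
    linarith [hp]
  have pc : 0 < p - c := by
    have h1 : dist A B ≤ dist A C + dist C B := dist_triangle A C B
    have h2 : dist A C + dist C B ≠ dist A B := by
      intro h
      have h4 : Collinear ℝ ({C, A, B} : Set (EuclideanSpace ℝ (Fin 2))) :=
        collinear_insert_of_mem_affineSpan_pair (dist_add_dist_eq_iff.mp h).mem_affineSpan
      rw [Set.insert_comm, Set.pair_comm C B] at h4
      exact hnc h4
    have h3 : dist A B < dist A C + dist C B := lt_of_le_of_ne h1 (Ne.symm h2)
    rw [dist_comm A C, dist_comm C B, ← hc, ← hb, ← ha] at h3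
    linarith [hp]
  obtain ⟨hsA0, hsA1⟩ := coord At sA hsA
  obtain ⟨hsB0, hsB1⟩ := coord Bt sB hsB
  obtain ⟨hsC0, hsC1⟩ := coord Ct sC hsC
  obtain ⟨hsM0, hsM1⟩ := coord M sM hsMe
  have hO0 : O 0 = (A 0 + B 0)/2 := by
    rw [hO]; simp [midpoint_eq_smul_add]; ring
  have hO1 : O 1 = (A 1 + B 1)/2 := by
    rw [hO]; simp [midpoint_eq_smul_add]; ring
  have hD : 0 < (Y 0 - X 0)^2 + (Y 1 - X 1)^2 := by
    have h1 : 0 < ‖Y - X‖ := norm_pos_iff.mpr hvne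
    have h2 : ⟪Y - X, Y - X⟫ = ‖Y - X‖^2 := real_inner_self_eq_norm_sq _
    rw [innerexp] at h2
    simp only [PiLp.sub_apply] at h2
    nlinarith [h1, h2]
  have perpA' := perpcomp A At footA
  rw [hsA0, hsA1] at perpA'
  have normA' := dsq A At (p - a) hAtd
  rw [hsA0, hsA1] at normA'
  have perpB' := perpcomp B Bt footB
  rw [hsB0, hsB1] at perpB'
  have normB' := dsq B Bt (p - b) hBtd
  rw [hsB0, hsB1] at normB'
  have perpC' := perpcomp C Ct footC
  rw [hsC0, hsC1] at perpC'
  have normC' := dsq C Ct (p - c) hCtd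
  rw [hsC0, hsC1] at normC'
  have perpO' := perpcomp O M footM
  rw [hsM0, hsM1, hO0, hO1] at perpO'
  have normO' := dsq O M (dist O M) rfl
  rw [hsM0, hsM1, hO0, hO1] at normO'
  have hnAB := dsq A B c hc.symm
  have hnCA := dsq C A b hb.symm
  have hnBC := dsq B C a ha.symm
  rcases mainalg18 (Y 0 - X 0) (Y 1 - X 1) (X 0) (X 1) (A 0) (A 1) (B 0) (B 1) (C 0) (C 1)
      (p - a) (p - b) (p - c) a b c (dist O M) sA sB sC sM hD pa pb pc dist_nonneg
      (by linarith [hp]) (by linarith [hp]) (by linarith [hp])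
      perpA' normA' perpB' normB' perpC' normC' perpO' normO' hnAB hnCA hnBC with
    ⟨hd2, hsM2⟩ | ⟨r, h0, h1⟩
  · constructor
    · rw [← hc]; exact hd2
    · ext i
      fin_cases i
      · show M 0 = midpoint ℝ At Bt 0
        have hm : midpoint ℝ At Bt 0 = (At 0 + Bt 0)/2 := by
          simp [midpoint_eq_smul_add]; ring
        rw [hm, hsM0, hsA0, hsB0, hsM2]; ring
      · show M 1 = midpoint ℝ At Bt 1
        have hm : midpoint ℝ At Bt 1 = (At 1 + Bt 1)/2 := by
          simp [midpoint_eq_smul_add]; ring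
        rw [hm, hsM1, hsA1, hsB1, hsM2]; ring
  · exfalso
    have hCeq : C = r • (B - A) + A := by
      ext i
      fin_cases i
      · show C 0 = (r • (B - A) + A) 0
        simp only [PiLp.add_apply, PiLp.smul_apply, PiLp.sub_apply, smul_eq_mul]
        linear_combination h0
      · show C 1 = (r • (B - A) + A) 1
        simp only [PiLp.add_apply, PiLp.smul_apply, PiLp.sub_apply, smul_eq_mul]
        linear_combination h1
    have hmemC : C ∈ affineSpan ℝ ({A, B} : Set (EuclideanSpace ℝ (Fin 2))) := by
      have := smul_vsub_vadd_mem_affineSpan_pair r A B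
      rw [vsub_eq_sub, vadd_eq_add] at this
      rwa [← hCeq] at this
    have h4 : Collinear ℝ ({C, A, B} : Set (EuclideanSpace ℝ (Fin 2))) :=
      collinear_insert_of_mem_affineSpan_pair hmemC
    rw [Set.insert_comm, Set.pair_comm C B] at h4
    exact hnc h4
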